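/- Let A be a uniform algebra on a compact Hausdorff space X and x ∈ X. If A has bounded relative units at x, then x is a generalized peak point for A: for every neighborhood U of x there exists f ∈ A with f(x) = ‖f‖_X = 1 and |f(y)| < 1 for all y ∈ X \ U. -/

import Mathlib

open Filter Topology

/-- Feinstein. Let `A` be a uniform algebra on a compact Hausdorff space
`X` and `x ∈ X`.  If `A` has bounded relative units at `x`, then `x` is a generalized peak
point for `A`. -/
theorem stmt7 {X : Type*} [TopologicalSpace X] [CompactSpace X] [T2Space X]
    (A : Subalgebra ℂ C(X, ℂ)) (hclosed : IsClosed (A : Set C(X, ℂ)))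
    (hsep : ∀ x y : X, x ≠ y → ∃ f ∈ A, f x ≠ f y)
    (x : X)
    (hbru : ∃ C : ℝ, 1 ≤ C ∧ ∀ K : Set X, IsCompact K → K ⊆ {x}ᶜ →
      ∃ f ∈ A, (∃ U ∈ nhds x, ∀ y ∈ U, f y = 0) ∧ (∀ y ∈ K, f y = 1) ∧ ‖f‖ ≤ C) :
    ∀ U ∈ nhds x, ∃ f ∈ A, f x = 1 ∧ ‖f‖ = 1 ∧ ∀ y : X, y ∉ U → ‖f y‖ < 1 := by
  classical
  have : Nonempty X := ⟨x⟩
  obtain ⟨C, hC1, hbru⟩ := hbru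
  intro U hU
  -- one step of the construction
  have step : ∀ W : Set X, IsOpen W → x ∈ W →
      ∃ (f : C(X, ℂ)) (W' : Set X), f ∈ A ∧ IsOpen W' ∧ x ∈ W' ∧ W' ⊆ W ∧
        (∀ y ∈ W', f y = 0) ∧ (∀ y ∉ W, f y = 1) ∧ ‖f‖ ≤ C := by
    intro W hWo hxW
    have hKc : IsCompact Wᶜ := hWo.isClosed_compl.isCompact
    have hKsub : Wᶜ ⊆ ({x} : Set X)ᶜ := by
      intro y hy
      simp only [Set.mem_compl_iff, Set.mem_singleton_iff]
      rintro rfl; exact hy hxW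
    obtain ⟨f, hfA, ⟨U0, hU0, hf0⟩, hf1, hnorm⟩ := hbru Wᶜ hKc hKsub
    refine ⟨f, interior U0 ∩ W, hfA, isOpen_interior.inter hWo,
      ⟨mem_interior_iff_mem_nhds.mpr hU0, hxW⟩, Set.inter_subset_right, ?_, ?_, hnorm⟩
    · intro y hy; exact hf0 y (interior_subset hy.1)
    · intro y hy; exact hf1 y hy
  choose! F W' hFA hW'o hxW' hW'sub hF0 hF1 hFnorm using step
  -- the decreasing sequence of open neighborhoods
  set Wseq : ℕ → Set X := fun n => Nat.rec (interior U) (fun _ Wn => W' Wn) n with hWseqdef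
  have hWseqS : ∀ n, Wseq (n + 1) = W' (Wseq n) := fun n => rfl
  have hbase : ∀ n, IsOpen (Wseq n) ∧ x ∈ Wseq n := by
    intro n
    induction n with
    | zero => exact ⟨isOpen_interior, mem_interior_iff_mem_nhds.mpr hU⟩
    | succ n ih => exact ⟨hW'o _ ih.1 ih.2, hxW' _ ih.1 ih.2⟩
  have hmono : ∀ n, Wseq (n + 1) ⊆ Wseq n := fun n => hW'sub _ (hbase n).1 (hbase n).2
  have hanti : Antitone Wseq := antitone_nat_of_succ_le hmono
  -- the sequence of functions
  set f : ℕ → C(X, ℂ) := fun n => F (Wseq n) with hfdef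
  have hfA' : ∀ n, f n ∈ A := fun n => hFA _ (hbase n).1 (hbase n).2
  have hf0' : ∀ n, ∀ y ∈ Wseq (n + 1), f n y = 0 := by
    intro n y hy
    exact hF0 _ (hbase n).1 (hbase n).2 y (by rwa [← hWseqS n])
  have hf1' : ∀ n, ∀ y ∉ Wseq n, f n y = 1 := fun n => hF1 _ (hbase n).1 (hbase n).2
  have hfn' : ∀ n, ‖f n‖ ≤ C := fun n => hFnorm _ (hbase n).1 (hbase n).2
  -- numerics
  have hC0 : (0:ℝ) < C := lt_of_lt_of_le one_pos hC1
  set r : ℝ := (2*C+1)/(2*C+2) with hrdef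
  have hden : (0:ℝ) < 2*C+2 := by linarith
  have hnum : (0:ℝ) < 2*C+1 := by linarith
  have hr0 : 0 < r := div_pos hnum hden
  have hr1 : r < 1 := (div_lt_one hden).mpr (by linarith)
  set c : ℝ := 1/(2*C+1) with hcdef
  have hc0 : 0 < c := by positivity
  set ε : ℕ → ℝ := fun n => c * r ^ (n + 1) with hεdef
  have hεpos : ∀ n, 0 < ε n := fun n => by positivity
  have hεeq : ∀ n, ε n = (c * r) * r ^ n := by intro n; simp only [hεdef]; ring
  have hgeo : Summable (fun n : ℕ => r ^ n) := summable_geometric_of_lt_one hr0.le hr1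
  have hεsum : Summable ε := by
    refine Summable.congr (hgeo.mul_left (c * r)) ?_
    intro n; rw [hεeq]
  have hεtsum : ∑' n, ε n = 1 := by
    calc ∑' n, ε n = ∑' n, (c * r) * r ^ n := tsum_congr hεeq
    _ = (c * r) * ∑' n, r ^ n := tsum_mul_left
    _ = (c * r) * (1 - r)⁻¹ := by rw [tsum_geometric_of_lt_one hr0.le hr1]
    _ = 1 := by
        rw [hrdef, hcdef]
        have h1 : (1:ℝ) - (2*C+1)/(2*C+2) = 1/(2*C+2) := by field_simp; ring
        rw [h1]
        field_simp
  have hεpart : ∀ n, ∑ m ∈ Finset.range n, ε m = 1 - r ^ n := by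
    intro n
    calc ∑ m ∈ Finset.range n, ε m = ∑ m ∈ Finset.range n, (c * r) * r ^ m := by
          exact Finset.sum_congr rfl fun m _ => hεeq m
    _ = (c * r) * ∑ m ∈ Finset.range n, r ^ m := by rw [Finset.mul_sum]
    _ = (c * r) * ((r ^ n - 1) / (r - 1)) := by rw [geom_sum_eq hr1.ne n]
    _ = 1 - r ^ n := by
        rw [hrdef, hcdef]
        have hne : (2*C+1)/(2*C+2) - 1 ≠ 0 := by
          intro h
          have : (2*C+1)/(2*C+2) = 1 := by linarith
          exact hr1.ne (hrdef ▸ this)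
        field_simp
        ring
  have hcr : c * r = 1 / (2*C+2) := by
    rw [hcdef, hrdef]; field_simp
  -- the series
  set g : ℕ → C(X, ℂ) := fun n => ((ε n : ℝ) : ℂ) • ((1 : C(X, ℂ)) - f n) with hgdef
  have hgnorm : ∀ n, ‖g n‖ ≤ ε n * (1 + C) := by
    intro n
    calc ‖g n‖ = ‖((ε n : ℝ) : ℂ)‖ * ‖(1 : C(X, ℂ)) - f n‖ := norm_smul _ _
    _ ≤ ε n * (1 + C) := by
        rw [Complex.norm_real, Real.norm_of_nonneg (hεpos n).le]
        refine mul_le_mul_of_nonneg_left ?_ (hεpos n).le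
        calc ‖(1 : C(X, ℂ)) - f n‖ ≤ ‖(1 : C(X, ℂ))‖ + ‖f n‖ := norm_sub_le _ _
        _ ≤ 1 + C := by rw [norm_one]; linarith [hfn' n]
  have hgsummable : Summable g :=
    Summable.of_norm_bounded (hεsum.mul_right (1 + C)) hgnorm
  set S : C(X, ℂ) := ∑' n, g n with hSdef
  have hHS : HasSum g S := hgsummable.hasSum
  -- evaluation of the sum
  have heval : ∀ y : X, S y = ∑' n, g n y := by
    intro y
    have := (ContinuousMap.evalCLM ℂ y).map_tsum hgsummable
    simpa using this
  have hgy : ∀ n y, g n y = ((ε n : ℝ) : ℂ) * (1 - f n y) := by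
    intro n y; simp [hgdef]
  -- pointwise facts
  have hval_in : ∀ n y, y ∈ Wseq (n + 1) → g n y = ((ε n : ℝ) : ℂ) := by
    intro n y hy; rw [hgy, hf0' n y hy]; ring
  have hval_out : ∀ n y, y ∉ Wseq n → g n y = 0 := by
    intro n y hy; rw [hgy, hf1' n y hy]; ring
  have hgynorm : ∀ n y, ‖g n y‖ ≤ ε n * (1 + C) := by
    intro n y
    exact le_trans (ContinuousMap.norm_coe_le_norm _ y) (hgnorm n)
  -- value at points in all the Wseq n
  have hval_all : ∀ y : X, (∀ n, y ∈ Wseq n) → S y = 1 := by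
    intro y hy
    rw [heval y]
    have : ∀ n, g n y = ((ε n : ℝ) : ℂ) := fun n => hval_in n y (hy (n + 1))
    rw [tsum_congr this, ← Complex.ofReal_tsum, hεtsum, Complex.ofReal_one]
  -- the uniform pointwise bound
  have hbound : ∀ y : X, ‖S y‖ ≤ 1 := by
    intro y
    by_cases hy : ∀ n, y ∈ Wseq n
    · rw [hval_all y hy]; simp
    · push_neg at hy
      have hk := Nat.find_spec hy
      have hkmin : ∀ j < Nat.find hy, y ∈ Wseq j := fun j hj =>
        not_not.mp (Nat.find_min hy hj)
      set k := Nat.find hy with hkdef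
      have hzero : ∀ m, m ∉ Finset.range k → g m y = 0 := by
        intro m hm
        rw [Finset.mem_range, not_lt] at hm
        exact hval_out m y fun hmem => hk (hanti hm hmem)
      rw [heval y, tsum_eq_sum hzero]
      refine le_trans (norm_sum_le _ _) ?_
      rcases Nat.eq_zero_or_pos k with hk0 | hkpos
      · rw [hk0]; simp
      · obtain ⟨j, hkj⟩ : ∃ j, k = j + 1 := ⟨k - 1, (Nat.succ_pred_eq_of_pos hkpos).symm⟩
        rw [hkj, Finset.sum_range_succ]
        have hsmall : ∀ m ∈ Finset.range j, ‖g m y‖ = ε m := by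
          intro m hm
          rw [Finset.mem_range] at hm
          rw [hval_in m y (hkmin (m + 1) (by omega))]
          rw [Complex.norm_real, Real.norm_of_nonneg (hεpos m).le]
        calc (∑ m ∈ Finset.range j, ‖g m y‖) + ‖g j y‖
            ≤ (∑ m ∈ Finset.range j, ε m) + ε j * (1 + C) := by
              gcongr with m hm
              · rw [hsmall m hm]
              · exact hgynorm j y
        _ = (1 - r ^ j) + (c * r) * r ^ j * (1 + C) := by
              rw [hεpart j, hεeq j]
        _ = 1 - r ^ j + (1 + C) / (2*C+2) * r ^ j := by rw [hcr]; ring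
        _ ≤ 1 := by
              have hrj : (0:ℝ) < r ^ j := pow_pos hr0 j
              have hhalf : (1 + C) / (2*C+2) = 1/2 := by field_simp; ring
              rw [hhalf]; nlinarith
  -- membership in A
  have hSA : S ∈ A := by
    have hmem : ∀ N, (∑ m ∈ Finset.range N, g m) ∈ A := by
      intro N
      refine Subalgebra.sum_mem A fun m _ => ?_
      exact A.smul_mem (A.sub_mem A.one_mem (hfA' m)) _
    exact hclosed.mem_of_tendsto hHS.tendsto_sum_nat (Eventually.of_forall hmem)
  -- conclusion
  have hSx : S x = 1 := hval_all x fun n => (hbase n).2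
  refine ⟨S, hSA, hSx, ?_, ?_⟩
  · refine le_antisymm ((ContinuousMap.norm_le _ zero_le_one).mpr hbound) ?_
    calc (1:ℝ) = ‖S x‖ := by rw [hSx]; simp
    _ ≤ ‖S‖ := ContinuousMap.norm_coe_le_norm S x
  · intro y hyU
    have hy0 : y ∉ Wseq 0 := fun h => hyU (interior_subset h)
    have : ∀ n, g n y = 0 := fun n =>
      hval_out n y fun hmem => hy0 (hanti (Nat.zero_le n) hmem)
    rw [heval y, tsum_congr this, tsum_zero]
    simp
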